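/- For all integers m ≥ 2 and 0 ≤ i ≤ m, the ratio d_i(m+1)/d_i(m) satisfies d_i(m+1)/d_i(m) ≤ (4m² + 7m + 3 + i·√(4m + 4i² + 1) − 2i²)/(2(m+1)(m+1-i)). -/

import Mathlib

open Finset

noncomputable def d (m : ℕ) (i : ℤ) : ℝ :=
  if 0 ≤ i ∧ i ≤ (m : ℤ) then
    ((2 : ℝ) ^ (2 * m))⁻¹ *
      ∑ k ∈ Finset.Icc i.toNat m,
        2 ^ k * (Nat.choose (2 * m - 2 * k) (m - k) : ℝ) *
          (Nat.choose (m + k) k : ℝ) * (Nat.choose k i.toNat : ℝ)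
  else 0

set_option maxHeartbeats 2000000


noncomputable def T (m k i : ℕ) : ℝ :=
  2 ^ k * (Nat.choose (2 * m - 2 * k) (m - k) : ℝ) *
    (Nat.choose (m + k) k : ℝ) * (Nat.choose k i : ℝ)

noncomputable def S (m i : ℕ) : ℝ := ∑ k ∈ Finset.Icc i m, T m k i

noncomputable def g1 (m k j : ℕ) : ℝ :=
  -(4 * ((m : ℝ) + k)) * 2 ^ k * (Nat.choose (2*m+2-2*k) (m+1-k) : ℝ) *
    (Nat.choose (m+k-1) (k-1) : ℝ) * (Nat.choose k j : ℝ)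

noncomputable def g2 (m k j : ℕ) : ℝ :=
  -(4 * ((m : ℝ) + 1) * ((m : ℝ) + k)) * 2 ^ k * (Nat.choose (2*m+2-2*k) (m+1-k) : ℝ) *
    (Nat.choose (m+k-1) (k-1) : ℝ) * (Nat.choose (k-1) j : ℝ)


lemma hA (a : ℕ) : ((a:ℝ)+1) * (Nat.choose (2*a+2) (a+1) : ℝ)
    = 2*(2*(a:ℝ)+1) * (Nat.choose (2*a) a : ℝ) := by
  have h1 := Nat.add_one_mul_choose_eq (2*a+1) a
  have h2 := Nat.add_one_mul_choose_eq (2*a) a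
  have h3 : Nat.choose (2*a+1) (a+1) = Nat.choose (2*a+1) a := by
    rw [← Nat.choose_symm (by omega : a+1 ≤ 2*a+1)]
    congr 1
    omega
  rw [h3] at h2
  have c1 : ((2*a+1+1:ℕ):ℝ) * (Nat.choose (2*a+1) a : ℝ)
      = (Nat.choose (2*a+1+1) (a+1) : ℝ) * ((a+1:ℕ):ℝ) := by exact_mod_cast h1
  have c2 : ((2*a+1:ℕ):ℝ) * (Nat.choose (2*a) a : ℝ)
      = (Nat.choose (2*a+1) a : ℝ) * ((a+1:ℕ):ℝ) := by exact_mod_cast h2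
  push_cast at c1 c2
  have e : (2*a+1+1 : ℕ) = 2*a+2 := by omega
  rw [e] at c1
  push_cast at c1
  nlinarith [c1, c2]

lemma hB (p q : ℕ) : ((q:ℝ)+1) * (Nat.choose (p+q+1) (q+1) : ℝ)
    = ((p:ℝ)+(q:ℝ)+1) * (Nat.choose (p+q) q : ℝ) := by
  have h := Nat.add_one_mul_choose_eq (p+q) q
  have c : ((p+q+1:ℕ):ℝ) * (Nat.choose (p+q) q : ℝ)
      = (Nat.choose (p+q+1) (q+1) : ℝ) * ((q+1:ℕ):ℝ) := by exact_mod_cast h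
  push_cast at c
  linarith

lemma hC (p q : ℕ) : ((p:ℝ)+1) * (Nat.choose (p+q+1) q : ℝ)
    = ((p:ℝ)+(q:ℝ)+1) * (Nat.choose (p+q) q : ℝ) := by
  have e1 : Nat.choose (p+q+1) q = Nat.choose (p+q+1) (p+1) := by
    rw [← Nat.choose_symm (by omega : p+1 ≤ p+q+1)]
    congr 1
    omega
  have e2 : Nat.choose (p+q) q = Nat.choose (p+q) p := by
    rw [← Nat.choose_symm (by omega : p ≤ p+q)]
    congr 1
    omega
  have h := hB q p
  rw [e1, e2, show p+q+1 = q+p+1 from by omega, show p+q = q+p from by omega]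
  linarith

lemma hD (n q : ℕ) (h : q ≤ n) : ((q:ℝ)+1) * (Nat.choose n (q+1) : ℝ)
    = ((n:ℝ)-(q:ℝ)) * (Nat.choose n q : ℝ) := by
  have hh := Nat.choose_succ_right_eq n q
  have c : (Nat.choose n (q+1) : ℝ) * ((q+1:ℕ):ℝ)
      = (Nat.choose n q : ℝ) * ((n - q:ℕ):ℝ) := by exact_mod_cast hh
  rw [Nat.cast_sub h] at c
  push_cast at c
  linarith

lemma hE (n q : ℕ) : ((q:ℝ)+1) * (Nat.choose (n+1) (q+1) : ℝ)
    = ((n:ℝ)+1) * (Nat.choose n q : ℝ) := by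
  have h := Nat.add_one_mul_choose_eq n q
  have c : ((n+1:ℕ):ℝ) * (Nat.choose n q : ℝ)
      = (Nat.choose (n+1) (q+1) : ℝ) * ((q+1:ℕ):ℝ) := by exact_mod_cast h
  push_cast at c
  linarith

lemma hF (p q : ℕ) (h : q ≤ p+1) : ((p:ℝ)+1-(q:ℝ)) * (Nat.choose (p+1) q : ℝ)
    = ((p:ℝ)+1) * (Nat.choose p q : ℝ) := by
  have hh := Nat.choose_mul_succ_eq p q
  have c : (Nat.choose p q : ℝ) * ((p+1:ℕ):ℝ)
      = (Nat.choose (p+1) q : ℝ) * ((p + 1 - q:ℕ):ℝ) := by exact_mod_cast hh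
  rw [Nat.cast_sub h] at c
  push_cast at c
  linarith

lemma P1 (m k j : ℕ) (hj : 1 ≤ j) (hjk : j ≤ k) (hkm : k ≤ m) :
    2*((m:ℝ)+1) * T (m+1) k j - 8*((m:ℝ)+j) * T m k (j-1) - 4*(4*(m:ℝ)+2*j+3) * T m k j
      = g1 m (k+1) j - g1 m k j := by
  obtain ⟨j', rfl⟩ : ∃ j', j = j'+1 := ⟨j-1, by omega⟩
  obtain ⟨k', rfl⟩ : ∃ k', k = k'+1 := ⟨k-1, by omega⟩
  obtain ⟨a, rfl⟩ : ∃ a, m = k'+1+a := ⟨m-(k'+1), by omega⟩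
  have hj'k : j' ≤ k' := by omega
  unfold T g1
  simp only [show 2*(k'+1+a+1) - 2*(k'+1) = 2*a+2 from by omega,
    show k'+1+a+1 - (k'+1) = a+1 from by omega,
    show k'+1+a+1 + (k'+1) = 2*k'+a+3 from by omega,
    show 2*(k'+1+a) - 2*(k'+1) = 2*a from by omega,
    show k'+1+a - (k'+1) = a from by omega,
    show k'+1+a + (k'+1) = 2*k'+a+2 from by omega,
    show j'+1-1 = j' from by omega,
    show 2*(k'+1+a)+2 - 2*(k'+1+1) = 2*a from by omega,
    show k'+1+a+1 - (k'+1+1) = a from by omega,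
    show k'+1+a + (k'+1+1) - 1 = 2*k'+a+2 from by omega,
    show k'+1+1-1 = k'+1 from by omega,
    show 2*(k'+1+a)+2 - 2*(k'+1) = 2*a+2 from by omega,
    show k'+1+a+1 - (k'+1) = a+1 from by omega,
    show k'+1+a + (k'+1) - 1 = 2*k'+a+1 from by omega,
    show k'+1-1 = k' from by omega,
    show k'+1+1 = k'+2 from by omega]
  have c1 := hA a
  have c3 := hC (k'+1+a) (k'+1)
  rw [show k'+1+a+(k'+1)+1 = 2*k'+a+3 from by omega,
      show k'+1+a+(k'+1) = 2*k'+a+2 from by omega] at c3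
  have c4 := hB (k'+a+1) k'
  rw [show k'+a+1+k'+1 = 2*k'+a+2 from by omega,
      show k'+a+1+k' = 2*k'+a+1 from by omega] at c4
  have c6 := hD (k'+1) j' (by omega)
  have c8 := hE (k'+1) j'
  rw [show k'+1+1 = k'+2 from by omega] at c8
  push_cast at c1 c3 c4 c6 c8 ⊢
  have ha1 : ((a:ℝ)+1) ≠ 0 := by positivity
  have ha2 : ((k':ℝ)+1+(a:ℝ)+1) ≠ 0 := by positivity
  have ha3 : (2*(k':ℝ)+(a:ℝ)+2) ≠ 0 := by positivity
  have ha4 : ((j':ℝ)+1) ≠ 0 := by positivity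
  have d1 : (Nat.choose (2*a+2) (a+1) : ℝ) = 2*(2*(a:ℝ)+1) * (Nat.choose (2*a) a : ℝ) / ((a:ℝ)+1) := by
    rw [eq_div_iff ha1]; linarith
  have d3 : (Nat.choose (2*k'+a+3) (k'+1) : ℝ)
      = (2*(k':ℝ)+(a:ℝ)+3) * (Nat.choose (2*k'+a+2) (k'+1) : ℝ) / ((k':ℝ)+1+(a:ℝ)+1) := by
    rw [eq_div_iff ha2]; linarith
  have d5 : (Nat.choose (2*k'+a+1) k' : ℝ)
      = ((k':ℝ)+1) * (Nat.choose (2*k'+a+2) (k'+1) : ℝ) / (2*(k':ℝ)+(a:ℝ)+2) := by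
    rw [eq_div_iff ha3]; linarith
  have d6 : (Nat.choose (k'+1) (j'+1) : ℝ)
      = ((k':ℝ)+1-(j':ℝ)) * (Nat.choose (k'+1) j' : ℝ) / ((j':ℝ)+1) := by
    rw [eq_div_iff ha4]; linarith
  have d8 : (Nat.choose (k'+2) (j'+1) : ℝ)
      = ((k':ℝ)+2) * (Nat.choose (k'+1) j' : ℝ) / ((j':ℝ)+1) := by
    rw [eq_div_iff ha4]; linarith
  rw [d1, d3, d5, d6, d8]
  field_simp
  ring

lemma P0 (m k : ℕ) (hk : 1 ≤ k) (hkm : k ≤ m) :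
    2*((m:ℝ)+1) * T (m+1) k 0 - 4*(4*(m:ℝ)+3) * T m k 0
      = g1 m (k+1) 0 - g1 m k 0 := by
  obtain ⟨k', rfl⟩ : ∃ k', k = k'+1 := ⟨k-1, by omega⟩
  obtain ⟨a, rfl⟩ : ∃ a, m = k'+1+a := ⟨m-(k'+1), by omega⟩
  unfold T g1
  simp only [Nat.choose_zero_right,
    show 2*(k'+1+a+1) - 2*(k'+1) = 2*a+2 from by omega,
    show k'+1+a+1 - (k'+1) = a+1 from by omega,
    show k'+1+a+1 + (k'+1) = 2*k'+a+3 from by omega,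
    show 2*(k'+1+a) - 2*(k'+1) = 2*a from by omega,
    show k'+1+a - (k'+1) = a from by omega,
    show k'+1+a + (k'+1) = 2*k'+a+2 from by omega,
    show 2*(k'+1+a)+2 - 2*(k'+1+1) = 2*a from by omega,
    show k'+1+a+1 - (k'+1+1) = a from by omega,
    show k'+1+a + (k'+1+1) - 1 = 2*k'+a+2 from by omega,
    show k'+1+1-1 = k'+1 from by omega,
    show 2*(k'+1+a)+2 - 2*(k'+1) = 2*a+2 from by omega,
    show k'+1+a + (k'+1) - 1 = 2*k'+a+1 from by omega,
    show k'+1-1 = k' from by omega]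
  have c1 := hA a
  have c3 := hC (k'+1+a) (k'+1)
  rw [show k'+1+a+(k'+1)+1 = 2*k'+a+3 from by omega,
      show k'+1+a+(k'+1) = 2*k'+a+2 from by omega] at c3
  have c4 := hB (k'+a+1) k'
  rw [show k'+a+1+k'+1 = 2*k'+a+2 from by omega,
      show k'+a+1+k' = 2*k'+a+1 from by omega] at c4
  push_cast at c1 c3 c4 ⊢
  have ha1 : ((a:ℝ)+1) ≠ 0 := by positivity
  have ha2 : ((k':ℝ)+1+(a:ℝ)+1) ≠ 0 := by positivity
  have ha3 : (2*(k':ℝ)+(a:ℝ)+2) ≠ 0 := by positivity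
  have d1 : (Nat.choose (2*a+2) (a+1) : ℝ) = 2*(2*(a:ℝ)+1) * (Nat.choose (2*a) a : ℝ) / ((a:ℝ)+1) := by
    rw [eq_div_iff ha1]; linarith
  have d3 : (Nat.choose (2*k'+a+3) (k'+1) : ℝ)
      = (2*(k':ℝ)+(a:ℝ)+3) * (Nat.choose (2*k'+a+2) (k'+1) : ℝ) / ((k':ℝ)+1+(a:ℝ)+1) := by
    rw [eq_div_iff ha2]; linarith
  have d5 : (Nat.choose (2*k'+a+1) k' : ℝ)
      = ((k':ℝ)+1) * (Nat.choose (2*k'+a+2) (k'+1) : ℝ) / (2*(k':ℝ)+(a:ℝ)+2) := by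
    rw [eq_div_iff ha3]; linarith
  rw [d1, d3, d5]
  field_simp
  ring

lemma P2 (m k j : ℕ) (hj : 1 ≤ j) (hjk : j ≤ k) (hkm : k ≤ m) :
    2*((m:ℝ)+1)*((m:ℝ)+1-j) * T (m+1) k j - 4*(4*(m:ℝ)-2*j+3)*((m:ℝ)+j+1) * T m k j
      + 8*(j:ℝ)*((j:ℝ)+1) * T m k (j+1)
      = g2 m (k+1) j - g2 m k j := by
  obtain ⟨j', rfl⟩ : ∃ j', j = j'+1 := ⟨j-1, by omega⟩
  obtain ⟨k', rfl⟩ : ∃ k', k = k'+1 := ⟨k-1, by omega⟩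
  obtain ⟨a, rfl⟩ : ∃ a, m = k'+1+a := ⟨m-(k'+1), by omega⟩
  have hj'k : j' ≤ k' := by omega
  unfold T g2
  simp only [show 2*(k'+1+a+1) - 2*(k'+1) = 2*a+2 from by omega,
    show k'+1+a+1 - (k'+1) = a+1 from by omega,
    show k'+1+a+1 + (k'+1) = 2*k'+a+3 from by omega,
    show 2*(k'+1+a) - 2*(k'+1) = 2*a from by omega,
    show k'+1+a - (k'+1) = a from by omega,
    show k'+1+a + (k'+1) = 2*k'+a+2 from by omega,
    show 2*(k'+1+a)+2 - 2*(k'+1+1) = 2*a from by omega,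
    show k'+1+a+1 - (k'+1+1) = a from by omega,
    show k'+1+a + (k'+1+1) - 1 = 2*k'+a+2 from by omega,
    show k'+1+1-1 = k'+1 from by omega,
    show 2*(k'+1+a)+2 - 2*(k'+1) = 2*a+2 from by omega,
    show k'+1+a + (k'+1) - 1 = 2*k'+a+1 from by omega,
    show k'+1-1 = k' from by omega,
    show j'+1+1 = j'+2 from by omega]
  have c1 := hA a
  have c3 := hC (k'+1+a) (k'+1)
  rw [show k'+1+a+(k'+1)+1 = 2*k'+a+3 from by omega,
      show k'+1+a+(k'+1) = 2*k'+a+2 from by omega] at c3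
  have c4 := hB (k'+a+1) k'
  rw [show k'+a+1+k'+1 = 2*k'+a+2 from by omega,
      show k'+a+1+k' = 2*k'+a+1 from by omega] at c4
  have c6 := hF k' (j'+1) (by omega)
  have c7 := hD (k'+1) (j'+1) (by omega)
  rw [show j'+1+1 = j'+2 from by omega] at c7
  push_cast at c1 c3 c4 c6 c7 ⊢
  have ha1 : ((a:ℝ)+1) ≠ 0 := by positivity
  have ha2 : ((k':ℝ)+1+(a:ℝ)+1) ≠ 0 := by positivity
  have ha3 : (2*(k':ℝ)+(a:ℝ)+2) ≠ 0 := by positivity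
  have ha4 : ((j':ℝ)+2) ≠ 0 := by positivity
  have ha5 : ((k':ℝ)+1) ≠ 0 := by positivity
  have d1 : (Nat.choose (2*a+2) (a+1) : ℝ) = 2*(2*(a:ℝ)+1) * (Nat.choose (2*a) a : ℝ) / ((a:ℝ)+1) := by
    rw [eq_div_iff ha1]; linarith
  have d3 : (Nat.choose (2*k'+a+3) (k'+1) : ℝ)
      = (2*(k':ℝ)+(a:ℝ)+3) * (Nat.choose (2*k'+a+2) (k'+1) : ℝ) / ((k':ℝ)+1+(a:ℝ)+1) := by
    rw [eq_div_iff ha2]; linarith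
  have d5 : (Nat.choose (2*k'+a+1) k' : ℝ)
      = ((k':ℝ)+1) * (Nat.choose (2*k'+a+2) (k'+1) : ℝ) / (2*(k':ℝ)+(a:ℝ)+2) := by
    rw [eq_div_iff ha3]; linarith
  have d6 : (Nat.choose k' (j'+1) : ℝ)
      = ((k':ℝ)-(j':ℝ)) * (Nat.choose (k'+1) (j'+1) : ℝ) / ((k':ℝ)+1) := by
    rw [eq_div_iff ha5]; linarith
  have d7 : (Nat.choose (k'+1) (j'+2) : ℝ)
      = ((k':ℝ)-(j':ℝ)) * (Nat.choose (k'+1) (j'+1) : ℝ) / ((j':ℝ)+2) := by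
    rw [eq_div_iff ha4]; linarith
  rw [d1, d3, d5, d6, d7]
  field_simp
  ring

lemma tele (f : ℕ → ℝ) : ∀ (m a : ℕ), a ≤ m + 1 →
    ∑ k ∈ Icc a m, (f (k+1) - f k) = f (m+1) - f a := by
  intro m
  induction m with
  | zero =>
    intro a ha
    interval_cases a <;> simp
  | succ n ih =>
    intro a ha
    rcases Nat.lt_or_ge a (n+2) with h | h
    · rw [Finset.sum_Icc_succ_top (by omega), ih a (by omega)]
      ring
    · have : a = n+2 := by omega
      subst this
      rw [Finset.Icc_eq_empty (by omega)]
      simp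

lemma sum_Icc_bot (f : ℕ → ℝ) {a b : ℕ} (h : a ≤ b) :
    ∑ k ∈ Icc a b, f k = f a + ∑ k ∈ Icc (a+1) b, f k := by
  rw [show Icc a b = insert a (Icc (a+1) b) from by
    ext x; simp only [Finset.mem_Icc, Finset.mem_insert]; omega]
  rw [Finset.sum_insert (by simp only [Finset.mem_Icc]; omega)]

-- top boundary for rec0/rec1

lemma bdtop (m j : ℕ) : 2*((m:ℝ)+1) * T (m+1) (m+1) j + g1 m (m+1) j = 0 := by
  unfold T g1
  simp only [show 2*(m+1) - 2*(m+1) = 0 from by omega,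
    show m+1-(m+1) = 0 from by omega,
    show 2*m+2-2*(m+1) = 0 from by omega,
    show m+1+(m+1) = 2*m+2 from by omega,
    show m+(m+1)-1 = 2*m from by omega,
    show m+1-1 = m from by omega,
    Nat.choose_self, Nat.choose_zero_right]
  have c1 := hA m
  push_cast at c1 ⊢
  have ha1 : ((m:ℝ)+1) ≠ 0 := by positivity
  have d1 : (Nat.choose (2*m+2) (m+1) : ℝ) = 2*(2*(m:ℝ)+1) * (Nat.choose (2*m) m : ℝ) / ((m:ℝ)+1) := by
    rw [eq_div_iff ha1]; linarith
  rw [d1]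
  field_simp
  ring

-- top boundary for rec2

lemma bdtop2 (m j : ℕ) (hj : j ≤ m) :
    2*((m:ℝ)+1)*((m:ℝ)+1-j) * T (m+1) (m+1) j + g2 m (m+1) j = 0 := by
  unfold T g2
  simp only [show 2*(m+1) - 2*(m+1) = 0 from by omega,
    show m+1-(m+1) = 0 from by omega,
    show 2*m+2-2*(m+1) = 0 from by omega,
    show m+1+(m+1) = 2*m+2 from by omega,
    show m+(m+1)-1 = 2*m from by omega,
    show m+1-1 = m from by omega,
    Nat.choose_self, Nat.choose_zero_right]
  have c1 := hA m
  have c2 := hF m j (by omega)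
  push_cast at c1 c2 ⊢
  have ha1 : ((m:ℝ)+1) ≠ 0 := by positivity
  have ha2 : ((m:ℝ)+1-(j:ℝ)) ≠ 0 := by
    have : (j:ℝ) ≤ (m:ℝ) := by exact_mod_cast hj
    nlinarith
  have d1 : (Nat.choose (2*m+2) (m+1) : ℝ) = 2*(2*(m:ℝ)+1) * (Nat.choose (2*m) m : ℝ) / ((m:ℝ)+1) := by
    rw [eq_div_iff ha1]; linarith
  have d2 : (Nat.choose (m+1) j : ℝ) = ((m:ℝ)+1) * (Nat.choose m j : ℝ) / ((m:ℝ)+1-(j:ℝ)) := by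
    rw [eq_div_iff ha2]; linarith
  rw [d1, d2]
  field_simp
  ring

-- bottom boundary for rec1

lemma bdbot1 (m j' : ℕ) (h : j'+1 ≤ m) :
    8*((m:ℝ)+j'+1) * T m j' j' = - g1 m (j'+1) (j'+1) := by
  unfold T g1
  simp only [show 2*m+2-2*(j'+1) = 2*m-2*j' from by omega,
    show m+1-(j'+1) = m-j' from by omega,
    show m+(j'+1)-1 = m+j' from by omega,
    show j'+1-1 = j' from by omega,
    Nat.choose_self]
  push_cast
  ring

-- bottom boundary for rec0

lemma bdbot0 (m : ℕ) :
    2*((m:ℝ)+1) * T (m+1) 0 0 - 4*(4*(m:ℝ)+3) * T m 0 0 = g1 m 1 0 := by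
  unfold T g1
  simp only [show 2*(m+1) - 2*0 = 2*m+2 from by omega,
    show m+1-0 = m+1 from by omega, show 2*m-2*0 = 2*m from by omega,
    show m-0 = m from by omega, show m+0 = m from by omega,
    show (m+1)+0 = m+1 from by omega,
    show 2*m+2-2*1 = 2*m from by omega, show m+1-1 = m from by omega,
    show (1:ℕ)-1 = 0 from by omega,
    Nat.choose_self, Nat.choose_zero_right]
  have c1 := hA m
  push_cast at c1 ⊢
  have ha1 : ((m:ℝ)+1) ≠ 0 := by positivity
  have d1 : (Nat.choose (2*m+2) (m+1) : ℝ) = 2*(2*(m:ℝ)+1) * (Nat.choose (2*m) m : ℝ) / ((m:ℝ)+1) := by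
    rw [eq_div_iff ha1]; linarith
  rw [d1]
  field_simp
  ring

lemma g2bot (m j : ℕ) (hj : 1 ≤ j) : g2 m j j = 0 := by
  unfold g2
  rw [Nat.choose_eq_zero_of_lt (by omega : j-1 < j)]
  simp

lemma Tzero (m j : ℕ) : T m j (j+1) = 0 := by
  unfold T
  rw [Nat.choose_eq_zero_of_lt (by omega : j < j+1)]
  simp

lemma rec0 (m : ℕ) : 2*((m:ℝ)+1) * S (m+1) 0 = 4*(4*(m:ℝ)+3) * S m 0 := by
  have hsplitL : S (m+1) 0 = (∑ k ∈ Icc 0 m, T (m+1) k 0) + T (m+1) (m+1) 0 :=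
    Finset.sum_Icc_succ_top (by omega) _
  have hL2 : (∑ k ∈ Icc 0 m, T (m+1) k 0) = T (m+1) 0 0 + ∑ k ∈ Icc 1 m, T (m+1) k 0 :=
    sum_Icc_bot _ (by omega)
  have hR : S m 0 = T m 0 0 + ∑ k ∈ Icc 1 m, T m k 0 := sum_Icc_bot _ (by omega)
  have htel : ∑ k ∈ Icc 1 m, (2*((m:ℝ)+1) * T (m+1) k 0 - 4*(4*(m:ℝ)+3) * T m k 0)
      = g1 m (m+1) 0 - g1 m 1 0 := by
    rw [← tele (fun k => g1 m k 0) m 1 (by omega)]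
    apply Finset.sum_congr rfl
    intro k hk
    simp only [Finset.mem_Icc] at hk
    exact P0 m k hk.1 hk.2
  simp only [Finset.sum_sub_distrib, ← Finset.mul_sum] at htel
  have h1 := bdtop m 0
  have h2 := bdbot0 m
  rw [hsplitL, hL2, hR]
  linarith

lemma rec1 (m j' : ℕ) (h : j'+1 ≤ m) :
    2*((m:ℝ)+1) * S (m+1) (j'+1)
      = 8*((m:ℝ)+j'+1) * S m j' + 4*(4*(m:ℝ)+2*j'+5) * S m (j'+1) := by
  have hsplitL : S (m+1) (j'+1) = (∑ k ∈ Icc (j'+1) m, T (m+1) k (j'+1)) + T (m+1) (m+1) (j'+1) :=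
    Finset.sum_Icc_succ_top (by omega) _
  have hR : S m j' = T m j' j' + ∑ k ∈ Icc (j'+1) m, T m k j' := sum_Icc_bot _ (by omega)
  have htel : ∑ k ∈ Icc (j'+1) m, (2*((m:ℝ)+1) * T (m+1) k (j'+1)
        - 8*((m:ℝ)+(j'+1)) * T m k j' - 4*(4*(m:ℝ)+2*(j'+1)+3) * T m k (j'+1))
      = g1 m (m+1) (j'+1) - g1 m (j'+1) (j'+1) := by
    rw [← tele (fun k => g1 m k (j'+1)) m (j'+1) (by omega)]
    apply Finset.sum_congr rfl
    intro k hk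
    simp only [Finset.mem_Icc] at hk
    have := P1 m k (j'+1) (by omega) hk.1 hk.2
    rw [show j'+1-1 = j' from by omega] at this
    convert this using 3 <;> push_cast <;> ring
  simp only [Finset.sum_sub_distrib, ← Finset.mul_sum] at htel
  have h1 := bdtop m (j'+1)
  have h2 := bdbot1 m j' h
  have hS : S m (j'+1) = ∑ k ∈ Icc (j'+1) m, T m k (j'+1) := rfl
  rw [hsplitL, hR, hS]
  push_cast at htel ⊢
  linarith

lemma rec2 (m j : ℕ) (hj : 1 ≤ j) (hjm : j ≤ m) :
    2*((m:ℝ)+1)*((m:ℝ)+1-j) * S (m+1) j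
      = 4*(4*(m:ℝ)-2*j+3)*((m:ℝ)+j+1) * S m j - 8*(j:ℝ)*((j:ℝ)+1) * S m (j+1) := by
  have hsplitL : S (m+1) j = (∑ k ∈ Icc j m, T (m+1) k j) + T (m+1) (m+1) j :=
    Finset.sum_Icc_succ_top (by omega) _
  have hR : (∑ k ∈ Icc j m, T m k (j+1)) = T m j (j+1) + ∑ k ∈ Icc (j+1) m, T m k (j+1) := by
    rcases Nat.lt_or_ge j m with h | h
    · exact sum_Icc_bot _ (by omega)
    · have : j = m := by omega
      subst this
      rw [Finset.Icc_self, Finset.sum_singleton, Finset.Icc_eq_empty (by omega)]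
      simp
  have htel : ∑ k ∈ Icc j m, (2*((m:ℝ)+1)*((m:ℝ)+1-j) * T (m+1) k j
        - 4*(4*(m:ℝ)-2*j+3)*((m:ℝ)+j+1) * T m k j + 8*(j:ℝ)*((j:ℝ)+1) * T m k (j+1))
      = g2 m (m+1) j - g2 m j j := by
    rw [← tele (fun k => g2 m k j) m j (by omega)]
    apply Finset.sum_congr rfl
    intro k hk
    simp only [Finset.mem_Icc] at hk
    exact P2 m k j hj hk.1 hk.2
  simp only [Finset.sum_add_distrib, Finset.sum_sub_distrib, ← Finset.mul_sum] at htel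
  have h1 := bdtop2 m j hjm
  have h2 := g2bot m j hj
  have h3 := Tzero m j
  have hS1 : S m j = ∑ k ∈ Icc j m, T m k j := rfl
  have hS2 : S m (j+1) = ∑ k ∈ Icc (j+1) m, T m k (j+1) := rfl
  rw [hsplitL, hS1, hS2]
  rw [hR] at htel
  rw [h2, h3] at htel
  ring_nf at htel h1 ⊢
  linarith [htel, h1]

lemma Tnonneg (m k i : ℕ) : 0 ≤ T m k i := by unfold T; positivity

lemma Spos (m j : ℕ) (hjm : j ≤ m) : 0 < S m j := by
  apply Finset.sum_pos' (fun k _ => Tnonneg m k j) ⟨m, by simp [Finset.mem_Icc, hjm], ?_⟩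
  unfold T
  simp only [show 2*m-2*m = 0 from by omega, show m-m = 0 from by omega, Nat.choose_self]
  have h1 : 0 < Nat.choose (m+m) m := Nat.choose_pos (by omega)
  have h2 : 0 < Nat.choose m j := Nat.choose_pos hjm
  positivity

lemma Sval20 : S 2 0 = 42 := by
  unfold S T
  rw [show Finset.Icc 0 2 = {0, 1, 2} from by decide]
  rw [Finset.sum_insert (by decide), Finset.sum_insert (by decide), Finset.sum_singleton]
  norm_num [Nat.choose]

lemma Sval21 : S 2 1 = 60 := by
  unfold S T
  rw [show Finset.Icc 1 2 = {1, 2} from by decide]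
  rw [Finset.sum_insert (by decide), Finset.sum_singleton]
  norm_num [Nat.choose]

lemma Sval22 : S 2 2 = 24 := by
  unfold S T
  rw [show Finset.Icc 2 2 = {2} from by decide, Finset.sum_singleton]
  norm_num [Nat.choose]

lemma Stop1 (m : ℕ) : 2 * S (m+1) m = (2*(m:ℝ)+3) * S (m+1) (m+1) := by
  have hS2 : S (m+1) (m+1) = T (m+1) (m+1) (m+1) := by
    unfold S; rw [Finset.Icc_self, Finset.sum_singleton]
  have hS1 : S (m+1) m = T (m+1) m m + T (m+1) (m+1) m := by
    unfold S
    rw [Finset.sum_Icc_succ_top (by omega), Finset.Icc_self, Finset.sum_singleton]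
  rw [hS1, hS2]
  unfold T
  simp only [show 2*(m+1) - 2*m = 2 from by omega, show m+1-m = 1 from by omega,
    show m+1+m = 2*m+1 from by omega,
    show 2*(m+1) - 2*(m+1) = 0 from by omega, show m+1-(m+1) = 0 from by omega,
    show m+1+(m+1) = 2*m+2 from by omega,
    Nat.choose_self, Nat.choose_succ_self_right,
    show Nat.choose 2 1 = 2 from rfl, show Nat.choose 0 0 = 1 from rfl]
  have hp : Nat.choose (2*m+2) (m+1) = 2 * Nat.choose (2*m+1) m := by
    have h1 : Nat.choose (2*m+2) (m+1) = Nat.choose (2*m+1) m + Nat.choose (2*m+1) (m+1) := by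
      rw [show 2*m+2 = (2*m+1)+1 from by omega]
      exact Nat.choose_succ_succ (2*m+1) m
    have h2 : Nat.choose (2*m+1) (m+1) = Nat.choose (2*m+1) m := by
      rw [← Nat.choose_symm (by omega : m+1 ≤ 2*m+1)]
      congr 1
      omega
    omega
  rw [hp]
  push_cast
  rw [pow_succ]
  ring

lemma Gpoly (m i s t : ℝ) (hm : 2 ≤ m) (hi1 : 1 ≤ i) (him : i ≤ m)
    (hs : 0 < s) (ht : 0 < t) (hs2 : s^2 = 4*m+4*i^2+1) (ht2 : t^2 = 4*m+4*i^2+5) :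
    0 ≤ i - 4*i^3 + (4*m^2+7*m+3-2*i^2)*t - (4*m^2+9*m+5-2*i^2)*s + i*s*t := by
  have hts : s ≤ t := by nlinarith
  have hst : s*t ≤ s^2 + 2 := by nlinarith [sq_nonneg (t-s)]
  have hP : (2*i^2*(2*m+3)-(m+1))^2 ≤ (i*(2*m+2)*s)^2 := by
    have : (i*(2*m+2)*s)^2 = i^2*(2*m+2)^2*(4*m+4*i^2+1) := by
      rw [mul_pow, mul_pow, hs2]
    rw [this]
    nlinarith [sq_nonneg (i-1), sq_nonneg (m-i), mul_nonneg (sub_nonneg.2 him) (sub_nonneg.2 hi1), sq_nonneg (m*i - i^2), mul_nonneg (mul_nonneg (sub_nonneg.2 him) (sub_nonneg.2 hi1)) (sub_nonneg.2 hi1)]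
  have hu : 0 < i*(2*m+2)*s := by positivity
  have hZ : 0 ≤ i*(2*m+2)*s + (m+1) - 2*i^2*(2*m+3) := by
    rcases le_or_gt (2*i^2*(2*m+3)-(m+1)) 0 with hv | hv
    · nlinarith
    · nlinarith [hP, mul_pos hu hv]
  have hW : 0 ≤ (i - 4*i^3 + (4*m^2+7*m+3-2*i^2)*t - (4*m^2+9*m+5-2*i^2)*s + i*s*t)*(t+s) := by
    have e : (i - 4*i^3 + (4*m^2+7*m+3-2*i^2)*t - (4*m^2+9*m+5-2*i^2)*s + i*s*t)*(t+s)
        = 4*(4*m^2+7*m+3-2*i^2) + 4*i*s + (2*i*(2*m+1)-(2*m+2)*s)*(t+s) := by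
      linear_combination (4*m^2+7*m+3-2*i^2 + i*s) * ht2 + (i*(t+s) - (4*m^2+7*m+3-2*i^2 + i*s)) * hs2
    rw [e]
    nlinarith [hZ, hst, mul_le_mul_of_nonneg_left hts (by positivity : (0:ℝ) ≤ 2*i*(2*m+1))]
  nlinarith [hW, mul_pos hs ht]

lemma ratioL : ∀ m : ℕ, 2 ≤ m → ∀ j' : ℕ, j'+1 ≤ m →
    2*((m:ℝ)+j'+1)*((m:ℝ)-j') * S m j'
      ≤ ((j':ℝ)+1)*(2*(m:ℝ)+1+Real.sqrt (4*(m:ℝ)+4*((j':ℝ)+1)^2+1)) * S m (j'+1) := by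
  intro m hm
  induction m, hm using Nat.le_induction with
  | base =>
    intro j' hj'
    have hj'le : j' ≤ 1 := by omega
    interval_cases j'
    · rw [Sval20, Sval21]
      rw [show (4*((2:ℕ):ℝ)+4*(((0:ℕ):ℝ)+1)^2+1) = 13 from by norm_num]
      have h13 : (3.4:ℝ) ≤ Real.sqrt 13 := by
        nlinarith [Real.sq_sqrt (by norm_num : (0:ℝ) ≤ (13:ℝ)), Real.sqrt_nonneg (13:ℝ)]
      push_cast
      nlinarith [h13]
    · rw [Sval21, Sval22]
      rw [show (4*((2:ℕ):ℝ)+4*(((1:ℕ):ℝ)+1)^2+1) = 5^2 from by norm_num,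
          Real.sqrt_sq (by norm_num : (0:ℝ) ≤ (5:ℝ))]
      push_cast
      norm_num
  | succ m hm2 IH =>
    intro j' hj'
    rcases Nat.lt_or_ge j' m with hcase | hcase
    -- main case : j'+1 ≤ m
    · have hj1m : j'+1 ≤ m := hcase
      push_cast
      set X := S m j' with hX
      set Y := S m (j'+1) with hY
      set N := S (m+1) j' with hNdef
      set D := S (m+1) (j'+1) with hDdef
      have hXpos : 0 < X := Spos m j' (by omega)
      have hYpos : 0 < Y := Spos m (j'+1) hj1m
      have hDpos : 0 < D := Spos (m+1) (j'+1) (by omega)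
      have hmR : (2:ℝ) ≤ (m:ℝ) := by exact_mod_cast hm2
      have hjmR : ((j':ℝ)+1) ≤ (m:ℝ) := by exact_mod_cast hj1m
      have hj0 : (0:ℝ) ≤ (j':ℝ) := by positivity
      set s := Real.sqrt (4*(m:ℝ)+4*((j':ℝ)+1)^2+1) with hsdef
      have hspos : 0 < s := Real.sqrt_pos.2 (by positivity)
      have hs2 : s^2 = 4*(m:ℝ)+4*((j':ℝ)+1)^2+1 := Real.sq_sqrt (by positivity)
      have htarg : (4*((m:ℝ)+1)+4*((j':ℝ)+1)^2+1) = 4*(m:ℝ)+4*((j':ℝ)+1)^2+5 := by ring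
      rw [htarg]
      set t := Real.sqrt (4*(m:ℝ)+4*((j':ℝ)+1)^2+5) with htdef
      have htpos : 0 < t := Real.sqrt_pos.2 (by positivity)
      have ht2 : t^2 = 4*(m:ℝ)+4*((j':ℝ)+1)^2+5 := Real.sq_sqrt (by positivity)
      have hIH := IH j' hj1m
      rw [← hX, ← hY, ← hsdef] at hIH
      -- abbreviations
      set b := ((j':ℝ)+1)*(2*(m:ℝ)+1+s)/(2*((m:ℝ)+j'+1)*((m:ℝ)-j')) with hbdef
      set b' := ((j':ℝ)+1)*(2*(m:ℝ)+3+t)/(2*((m:ℝ)+j'+2)*((m:ℝ)+1-j')) with hb'def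
      set α := 2*(4*(m:ℝ)-2*j'+3)*((m:ℝ)+j'+1)/(((m:ℝ)+1)*((m:ℝ)+1-j')) with hαdef
      set β := 4*(j':ℝ)*((j':ℝ)+1)/(((m:ℝ)+1)*((m:ℝ)+1-j')) with hβdef
      set A := 2*(4*(m:ℝ)+2*j'+5)/((m:ℝ)+1) with hAdef
      set B := 4*((m:ℝ)+j'+1)/((m:ℝ)+1) with hBdef
      have hm1 : (0:ℝ) < (m:ℝ)+1 := by linarith
      have hmj : (0:ℝ) < (m:ℝ)-j' := by linarith
      have hmj1 : (0:ℝ) < (m:ℝ)+1-j' := by linarith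
      have hmjp : (0:ℝ) < (m:ℝ)+j'+1 := by linarith
      have hmjp2 : (0:ℝ) < (m:ℝ)+j'+2 := by linarith
      -- recurrence facts
      have hD' : D = A*Y + B*X := by
        have h := rec1 m j' hj1m
        rw [← hX, ← hY, ← hDdef] at h
        rw [hAdef, hBdef]
        field_simp
        linarith
      have hN' : N = α*X - β*Y := by
        have h : 2*((m:ℝ)+1)*((m:ℝ)+1-(j':ℝ))*N
            = 4*(4*(m:ℝ)-2*(j':ℝ)+3)*((m:ℝ)+(j':ℝ)+1)*X - 8*(j':ℝ)*((j':ℝ)+1)*Y := by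
          rcases Nat.eq_zero_or_pos j' with h0 | h0
          · subst h0
            have h := rec0 m
            rw [← hX, ← hNdef] at h
            push_cast
            nlinarith [h]
          · have h := rec2 m j' h0 (by omega)
            rw [← hX, ← hNdef] at h
            have : S m (j'+1) = Y := by rw [hY]
            rw [this] at h
            linarith
        rw [hαdef, hβdef]
        field_simp
        nlinarith [h]
      have hb : X ≤ b*Y := by
        rw [hbdef]
        rw [div_mul_eq_mul_div, le_div_iff₀ (by positivity)]
        nlinarith [hIH]
      have hb0 : 0 ≤ b := by
        rw [hbdef]
        apply div_nonneg
        · positivity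
        · positivity
      have hABb : 0 < A + B*b := by
        have hA0 : 0 < A := by rw [hAdef]; positivity
        have hB0 : 0 ≤ B := by rw [hBdef]; positivity
        nlinarith [mul_nonneg hB0 hb0]
      have hcoef : 0 ≤ α*A + β*B := by
        have hα0 : 0 ≤ α := by
          rw [hαdef]
          apply div_nonneg
          · nlinarith
          · positivity
        have hβ0 : 0 ≤ β := by rw [hβdef]; positivity
        have hA0 : (0:ℝ) ≤ A := by rw [hAdef]; positivity
        have hB0 : (0:ℝ) ≤ B := by rw [hBdef]; positivity
        nlinarith [mul_nonneg hα0 hA0, mul_nonneg hβ0 hB0]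
      have key1 : N*(A+B*b) ≤ (α*b-β)*D := by
        rw [hN', hD']
        have e : (α*b-β)*(A*Y+B*X) - (α*X-β*Y)*(A+B*b) = (α*A+β*B)*(b*Y-X) := by ring
        linarith [e, mul_nonneg hcoef (sub_nonneg.2 hb)]
      have key2 : α*b-β ≤ b'*(A+B*b) := by
        have hG := Gpoly (m:ℝ) ((j':ℝ)+1) s t hmR (by linarith) hjmR hspos htpos
          (by rw [hs2]) (by rw [ht2])
        have e2 : b'*(A+B*b) - (α*b-β)
            = ((j':ℝ)+1)*((j':ℝ)+1 - 4*((j':ℝ)+1)^3 + (4*(m:ℝ)^2+7*(m:ℝ)+3-2*((j':ℝ)+1)^2)*t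
                - (4*(m:ℝ)^2+9*(m:ℝ)+5-2*((j':ℝ)+1)^2)*s + ((j':ℝ)+1)*s*t)
              / (((m:ℝ)-j')*((m:ℝ)+1)*((m:ℝ)+1-j')*((m:ℝ)+j'+2)) := by
          rw [hbdef, hb'def, hαdef, hβdef, hAdef, hBdef]
          field_simp
          ring
        have hd0 : (0:ℝ) ≤ ((m:ℝ)-j')*((m:ℝ)+1)*((m:ℝ)+1-j')*((m:ℝ)+j'+2) := by
          exact mul_nonneg (mul_nonneg (mul_nonneg hmj.le hm1.le) hmj1.le) hmjp2.le
        linarith [e2, div_nonneg (mul_nonneg (by positivity : (0:ℝ) ≤ (j':ℝ)+1) hG) hd0]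
      have key3 : N ≤ b'*D := by
        have h2 := mul_le_mul_of_nonneg_right key2 hDpos.le
        have e : b'*(A+B*b)*D = (b'*D)*(A+B*b) := by ring
        apply le_of_mul_le_mul_right _ hABb
        calc N*(A+B*b) ≤ (α*b-β)*D := key1
          _ ≤ b'*(A+B*b)*D := h2
          _ = (b'*D)*(A+B*b) := e
      have hfin : 2*((m:ℝ)+j'+2)*((m:ℝ)+1-j')*(b'*D) = ((j':ℝ)+1)*(2*(m:ℝ)+3+t)*D := by
        rw [hb'def]
        field_simp
        try ring
      have hcoef2 : (0:ℝ) ≤ 2*((m:ℝ)+j'+2)*((m:ℝ)+1-j') := by nlinarith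
      have step := mul_le_mul_of_nonneg_left key3 hcoef2
      have e3 : 2*((m:ℝ)+1+j'+1)*((m:ℝ)+1-j')*N = 2*((m:ℝ)+j'+2)*((m:ℝ)+1-j')*N := by ring
      have e4 : ((j':ℝ)+1)*(2*((m:ℝ)+1)+1+t)*D = ((j':ℝ)+1)*(2*(m:ℝ)+3+t)*D := by ring
      ring_nf at step hfin e3 e4 ⊢
      linarith [step, hfin, e3, e4]
    -- top case : j' = m
    · have : j' = m := by omega
      subst this
      push_cast
      rw [show (4*((j':ℝ)+1)+4*((j':ℝ)+1)^2+1) = (2*(j':ℝ)+3)^2 from by ring,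
          Real.sqrt_sq (by positivity)]
      have h := Stop1 j'
      have hpos := Spos (j'+1) (j'+1) le_rfl
      nlinarith [h, hpos]

theorem chen_gu_upper_bound (m : ℕ) (i : ℤ) (hm : 2 ≤ m) (h0 : 0 ≤ i) (h1 : i ≤ (m : ℤ)) :
    d (m + 1) i / d m i ≤
      (4 * m ^ 2 + 7 * m + 3 + i * Real.sqrt (4 * m + 4 * i ^ 2 + 1) - 2 * i ^ 2) /
        (2 * (m + 1) * (m + 1 - i)) := by
  obtain ⟨j, rfl⟩ : ∃ j : ℕ, i = (j:ℤ) := ⟨i.toNat, (Int.toNat_of_nonneg h0).symm⟩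
  have hjm : j ≤ m := by exact_mod_cast h1
  have hij : ((j:ℤ):ℝ) = (j:ℝ) := by push_cast; ring
  have hd1 : d m (j:ℤ) = ((2:ℝ)^(2*m))⁻¹ * S m j := by
    rw [d, if_pos ⟨h0, h1⟩]
    simp only [Int.toNat_natCast]
    rfl
  have hd2 : d (m+1) (j:ℤ) = ((2:ℝ)^(2*(m+1)))⁻¹ * S (m+1) j := by
    rw [d, if_pos ⟨h0, by push_cast; omega⟩]
    simp only [Int.toNat_natCast]
    rfl
  have hXpos : 0 < S m j := Spos m j hjm
  have hDpos : 0 < S (m+1) j := Spos (m+1) j (by omega)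
  have hmR : (2:ℝ) ≤ (m:ℝ) := by exact_mod_cast hm
  have hjR : (j:ℝ) ≤ (m:ℝ) := by exact_mod_cast hjm
  have hj0 : (0:ℝ) ≤ (j:ℝ) := by positivity
  set s := Real.sqrt (4*(m:ℝ)+4*((j:ℝ))^2+1) with hsdef
  have hs0 : 0 ≤ s := Real.sqrt_nonneg _
  -- key inequality
  have key : 2*((m:ℝ)+1)*((m:ℝ)+1-(j:ℝ)) * S (m+1) j
      ≤ 4*(4*(m:ℝ)^2+7*(m:ℝ)+3+(j:ℝ)*s-2*(j:ℝ)^2) * S m j := by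
    rcases Nat.eq_zero_or_pos j with h0j | h0j
    · subst h0j
      clear hij hd1 hd2
      have h := rec0 m
      push_cast
      nlinarith [h]
    · obtain ⟨j', rfl⟩ : ∃ j', j = j'+1 := ⟨j-1, by omega⟩
      have hj1m : j'+1 ≤ m := hjm
      have e := rec1 m j' hj1m
      have hr := ratioL m hm j' hj1m
      rw [hsdef]
      push_cast at e hr ⊢
      nlinarith [e, hr, Spos m (j'+1) hj1m, hs0]
  -- assemble
  rw [hd1, hd2, hij]
  have hpow : ((2:ℝ)^(2*(m+1)))⁻¹ = ((2:ℝ)^(2*m))⁻¹ / 4 := by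
    rw [show 2*(m+1) = 2*m+2 from by omega, pow_add]
    norm_num
    ring
  rw [hpow]
  have hP : (0:ℝ) < ((2:ℝ)^(2*m))⁻¹ := by positivity
  have hdenpos : (0:ℝ) < 2*((m:ℝ)+1)*((m:ℝ)+1-(j:ℝ)) := by nlinarith
  rw [div_le_div_iff₀ (by positivity) (by push_cast; nlinarith)]
  have expand : (((2:ℝ)^(2*m))⁻¹/4 * S (m+1) j) * (2 * ((m:ℝ) + 1) * ((m:ℝ) + 1 - (j:ℝ)))
      ≤ (((2:ℝ)^(2*m))⁻¹ * S m j) * (4*(m:ℝ)^2+7*(m:ℝ)+3+(j:ℝ)*s-2*(j:ℝ)^2) := by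
    have := mul_le_mul_of_nonneg_left key (le_of_lt hP)
    nlinarith [this]
  push_cast
  nlinarith [expand]
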